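/- Let Γ: ℝ₊ⁿ → ℝ₊ⁿ be monotone with components Γᵢ given by either sums or maxima of K∞-or-zero gains γᵢⱼ (γᵢᵢ = 0), and suppose there is α ∈ K∞ so that Γ∘D_α ≱ id on ℝ₊ⁿ \ {0} where D_α applies (id+α) to coordinates in I_Σ and identity to coordinates in I_max. Then there exists φ ∈ K∞ such that for all w, v ∈ ℝ₊ⁿ, the inequality w ≤ μ(Γ(w), v) implies |w|_max ≤ φ(|v|_max), where μᵢ(a,b) = a+b for i ∈ I_Σ and μᵢ(a,b) = max{a,b} for i ∈ I_max. Moreover φ can be chosen as φ(r) = max over components of [D̃∘μ(Γ,id)]ⁿ(r,…,r), with D̃ the diagonal operator applying id+α⁻¹ on I_Σ coordinates and identity on I_max coordinates. -/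

import Mathlib

open NNReal

/-- A function is of class K∞: continuous, strictly increasing, unbounded, and 0 at 0. -/
def KInf (f : ℝ≥0 → ℝ≥0) : Prop :=
  Continuous f ∧ StrictMono f ∧ f 0 = 0 ∧ ∀ M : ℝ≥0, ∃ r, M < f r

/-- Continuity of a finite supremum of continuous `ℝ≥0`-valued functions. -/
lemma cont_finset_sup {X : Type*} [TopologicalSpace X] {ι : Type*} [DecidableEq ι]
    (t : Finset ι) (f : ι → X → ℝ≥0) (hf : ∀ i, Continuous (f i)) :
    Continuous fun x => t.sup (fun i => f i x) := by
  induction t using Finset.induction_on with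
  | empty => simpa using continuous_const
  | insert _ _ ha ih =>
      simp only [Finset.sup_insert]
      exact (hf _).max ih

/-- Main technical lemma: under the mixed small gain condition Γ∘D_α ≱ id there is a
K∞ function φ (given explicitly by φ(r) = max component of [D̃∘μ(Γ,id)]ⁿ(r,…,r)) such
that w ≤ μ(Γ(w), v) implies |w|_max ≤ φ(|v|_max). -/
theorem small_gain_bound (n : ℕ) (hn : 1 ≤ n) (Isum : Finset (Fin n))
    (γ : Fin n → Fin n → ℝ≥0 → ℝ≥0)
    (hγ : ∀ i j, KInf (γ i j) ∨ γ i j = fun _ => 0)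
    (hγdiag : ∀ i, γ i i = fun _ => 0)
    (α αinv : ℝ≥0 → ℝ≥0) (hα : KInf α)
    (hαinv : Function.LeftInverse αinv α ∧ Function.RightInverse αinv α)
    (Γ : (Fin n → ℝ≥0) → Fin n → ℝ≥0)
    (hΓ : ∀ s i, Γ s i =
      if i ∈ Isum then ∑ j, γ i j (s j) else Finset.univ.sup fun j => γ i j (s j))
    (hsg : ∀ s : Fin n → ℝ≥0, s ≠ 0 →
      ∃ i, Γ (fun j => if j ∈ Isum then s j + α (s j) else s j) i < s i)
    (μ : (Fin n → ℝ≥0) → (Fin n → ℝ≥0) → Fin n → ℝ≥0)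
    (hμ : ∀ w v i, μ w v i = if i ∈ Isum then w i + v i else max (w i) (v i))
    (M : (Fin n → ℝ≥0) → Fin n → ℝ≥0)
    (hM : ∀ v i, M v i =
      if i ∈ Isum then μ (Γ v) v i + αinv (μ (Γ v) v i) else μ (Γ v) v i)
    (φ : ℝ≥0 → ℝ≥0)
    (hφ : ∀ r, φ r = Finset.univ.sup fun i => M^[n] (fun _ => r) i) :
    KInf φ ∧
      ∀ w v : Fin n → ℝ≥0, w ≤ μ (Γ w) v →
        Finset.univ.sup w ≤ φ (Finset.univ.sup v) := by
  classical
  have hne : (Finset.univ : Finset (Fin n)).Nonempty := ⟨⟨0, hn⟩, Finset.mem_univ _⟩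
  -- basic facts about the gains
  have hγmono : ∀ i j, Monotone (γ i j) := by
    intro i j
    rcases hγ i j with h | h
    · exact h.2.1.monotone
    · rw [h]; exact monotone_const
  have hγ0 : ∀ i j, γ i j 0 = 0 := by
    intro i j
    rcases hγ i j with h | h
    · exact h.2.2.1
    · rw [h]
  -- convenient unfoldings
  have hΓs : ∀ y i, i ∈ Isum → Γ y i = ∑ j, γ i j (y j) := by
    intro y i h; rw [hΓ, if_pos h]
  have hΓm : ∀ y i, i ∉ Isum → Γ y i = Finset.univ.sup fun j => γ i j (y j) := by
    intro y i h; rw [hΓ, if_neg h]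
  have hμs : ∀ a b i, i ∈ Isum → μ a b i = a i + b i := by
    intro a b i h; rw [hμ, if_pos h]
  have hμm : ∀ a b i, i ∉ Isum → μ a b i = max (a i) (b i) := by
    intro a b i h; rw [hμ, if_neg h]
  have hMsum : ∀ y i, i ∈ Isum → M y i = (Γ y i + y i) + αinv (Γ y i + y i) := by
    intro y i h; rw [hM, if_pos h, hμs _ _ _ h]
  have hMmax : ∀ y i, i ∉ Isum → M y i = max (Γ y i) (y i) := by
    intro y i h; rw [hM, if_neg h, hμm _ _ _ h]
  have hΓmono : ∀ u u', (∀ j, u j ≤ u' j) → ∀ i, Γ u i ≤ Γ u' i := by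
    intro u u' huu i
    rw [hΓ, hΓ]
    split
    · exact Finset.sum_le_sum fun j _ => hγmono i j (huu j)
    · exact Finset.sup_mono_fun fun j _ => hγmono i j (huu j)
  -- αinv facts
  have hαinv_mono : Monotone αinv := by
    intro a b hab
    by_contra hcon
    push_neg at hcon
    have := hα.2.1 hcon
    rw [hαinv.2 a, hαinv.2 b] at this
    exact absurd hab (not_le.mpr this)
  have hαinv0 : αinv 0 = 0 := by
    have h := hαinv.1 0
    rwa [hα.2.2.1] at h
  have hαinv_cont : Continuous αinv := by
    let e : ℝ≥0 ≃o ℝ≥0 :=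
      { toFun := α, invFun := αinv, left_inv := hαinv.1, right_inv := hαinv.2,
        map_rel_iff' := fun {a b} => hα.2.1.le_iff_le }
    exact e.symm.continuous
  -- M dominates the identity
  have hMge : ∀ y i, y i ≤ M y i := by
    intro y i
    by_cases h : i ∈ Isum
    · rw [hMsum y i h]
      exact le_add_self.trans le_self_add
    · rw [hMmax y i h]
      exact le_max_right _ _
  have hiter_ge : ∀ (y : Fin n → ℝ≥0) k i, y i ≤ M^[k] y i := by
    intro y k
    induction k with
    | zero => intro i; simp
    | succ k ih =>
        intro i
        rw [Function.iterate_succ_apply']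
        exact (ih i).trans (hMge _ i)
  have hitmono : ∀ (y : Fin n → ℝ≥0) k i, M^[k] y i ≤ M^[k + 1] y i := by
    intro y k i
    rw [Function.iterate_succ_apply']
    exact hMge _ i
  -- surjectivity of id + α
  have pre : ∀ y : ℝ≥0, ∃ t, t + α t = y := by
    intro y
    have hc : ContinuousOn (fun t => t + α t) (Set.Icc 0 y) :=
      (continuous_id.add hα.1).continuousOn
    have hmem : y ∈ Set.Icc ((fun t => t + α t) 0) ((fun t => t + α t) y) := by
      constructor
      · simp [hα.2.2.1]
      · exact le_self_add
    obtain ⟨t, -, ht⟩ := intermediate_value_Icc (zero_le (a := y)) hc hmem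
    exact ⟨t, ht⟩
  ----------------------------------------------------------------
  -- KEY LEMMA
  ----------------------------------------------------------------
  have key : ∀ w x : Fin n → ℝ≥0, (∀ i, w i ≤ μ (Γ w) x i) → (∃ i, x i < w i) →
      ∃ i, x i < w i ∧ w i ≤ M x i := by
    intro w x hwx hex
    obtain ⟨i0, hi0⟩ := hex
    set s : Fin n → ℝ≥0 :=
      fun j => if x j < w j then (if j ∈ Isum then Classical.choose (pre (w j)) else w j) else 0
      with hsdef
    set Ds : Fin n → ℝ≥0 := fun j => if x j < w j then w j else 0 with hDsdef
    have hsspec : ∀ j, x j < w j → j ∈ Isum → s j + α (s j) = w j := by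
      intro j h1 h2
      simp only [hsdef, if_pos h1, if_pos h2]
      exact Classical.choose_spec (pre (w j))
    have hDs : ∀ j, (if j ∈ Isum then s j + α (s j) else s j) = Ds j := by
      intro j
      by_cases h1 : x j < w j
      · by_cases h2 : j ∈ Isum
        · rw [if_pos h2, hsspec j h1 h2, hDsdef]; simp [h1]
        · simp [hsdef, hDsdef, h1, h2]
      · by_cases h2 : j ∈ Isum
        · simp [hsdef, hDsdef, h1, h2, hα.2.2.1]
        · simp [hsdef, hDsdef, h1, h2]
    have hs_pos : ∀ j, x j < w j → 0 < s j := by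
      intro j h1
      have hwj : 0 < w j := lt_of_le_of_lt zero_le h1
      by_cases h2 : j ∈ Isum
      · rcases eq_or_lt_of_le (zero_le (a := s j)) with h | h
        · exfalso
          have := hsspec j h1 h2
          rw [← h, hα.2.2.1] at this
          simp at this
          exact absurd this.symm hwj.ne'
        · exact h
      · simpa [hsdef, h1, h2] using hwj
    have hs0 : ∀ j, ¬ x j < w j → s j = 0 := by
      intro j h1; simp [hsdef, h1]
    have hsne : s ≠ 0 := by
      intro h
      have := congrFun h i0
      exact (hs_pos i0 hi0).ne' this
    obtain ⟨i, hilt⟩ := hsg s hsne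
    rw [show (fun j => if j ∈ Isum then s j + α (s j) else s j) = Ds from funext hDs] at hilt
    have hxiwi : x i < w i := by
      by_contra h
      rw [hs0 i h] at hilt
      exact absurd hilt (not_lt.mpr zero_le)
    refine ⟨i, hxiwi, ?_⟩
    by_cases hi : i ∈ Isum
    · -- sum case
      have hsi : s i + α (s i) = w i := hsspec i hxiwi hi
      have hA2 : Γ Ds i + α (Γ Ds i) < w i := by
        rw [← hsi]
        exact add_lt_add_of_lt_of_le hilt (hα.2.1.monotone hilt.le)
      have hΓw : Γ w i ≤ Γ Ds i + Γ x i := by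
        rw [hΓs w i hi, hΓs x i hi, hΓs Ds i hi, ← Finset.sum_add_distrib]
        refine Finset.sum_le_sum fun j _ => ?_
        by_cases hj : x j < w j
        · simp only [hDsdef, if_pos hj]
          exact le_self_add
        · simp only [hDsdef, if_neg hj]
          exact (hγmono i j (not_lt.mp hj)).trans le_add_self
      have hwi : w i ≤ Γ w i + x i := by
        have h := hwx i
        rwa [hμs _ _ _ hi] at h
      have hwi2 : w i ≤ Γ Ds i + (Γ x i + x i) := by
        calc w i ≤ (Γ Ds i + Γ x i) + x i := hwi.trans (add_le_add_left hΓw _)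
          _ = Γ Ds i + (Γ x i + x i) := add_assoc _ _ _
      have hαA : α (Γ Ds i) < Γ x i + x i :=
        lt_of_add_lt_add_left (lt_of_lt_of_le hA2 hwi2)
      have hAle : Γ Ds i ≤ αinv (Γ x i + x i) := by
        have h := hαinv_mono hαA.le
        rwa [hαinv.1 _] at h
      rw [hMsum x i hi]
      calc w i ≤ Γ Ds i + (Γ x i + x i) := hwi2
        _ ≤ αinv (Γ x i + x i) + (Γ x i + x i) := add_le_add_left hAle _
        _ = (Γ x i + x i) + αinv (Γ x i + x i) := add_comm _ _
    · -- max case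
      have hsi : s i = w i := by simp [hsdef, hxiwi, hi]
      rw [hsi] at hilt
      have hwi : w i ≤ max (Γ w i) (x i) := by
        have h := hwx i
        rwa [hμm _ _ _ hi] at h
      rw [hMmax x i hi]
      rcases le_max_iff.mp hwi with h | h
      · obtain ⟨j, -, hj⟩ := Finset.exists_mem_eq_sup Finset.univ hne (fun j => γ i j (w j))
        have hΓwi : Γ w i = γ i j (w j) := by rw [hΓm w i hi]; exact hj
        by_cases hxj : x j < w j
        · exfalso
          have h1 : γ i j (w j) ≤ Γ Ds i := by
            have h2 : γ i j (Ds j) = γ i j (w j) := by simp [hDsdef, hxj]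
            rw [hΓm Ds i hi, ← h2]
            exact Finset.le_sup (f := fun j => γ i j (Ds j)) (Finset.mem_univ j)
          have : w i < w i := lt_of_le_of_lt ((h.trans_eq hΓwi).trans h1) hilt
          exact lt_irrefl _ this
        · have h2 : w i ≤ γ i j (x j) :=
            (h.trans_eq hΓwi).trans (hγmono i j (not_lt.mp hxj))
          refine le_max_of_le_left (h2.trans ?_)
          rw [hΓm x i hi]
          exact Finset.le_sup (f := fun j => γ i j (x j)) (Finset.mem_univ j)
      · exact le_max_of_le_right h
  ----------------------------------------------------------------
  -- strict monotonicity step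
  ----------------------------------------------------------------
  have hstep : ∀ u u' : Fin n → ℝ≥0, (∀ j, u j < u' j) → (∀ j, 0 < u' j) →
      ∀ i, M u i < M u' i := by
    intro u u' hlt hpos i
    by_cases hi : i ∈ Isum
    · rw [hMsum u i hi, hMsum u' i hi]
      have hF : Γ u i + u i < Γ u' i + u' i :=
        add_lt_add_of_le_of_lt (hΓmono u u' (fun j => (hlt j).le) i) (hlt i)
      exact add_lt_add_of_lt_of_le hF (hαinv_mono hF.le)
    · rw [hMmax u i hi]
      have hMpos : (⊥ : ℝ≥0) < M u' i := lt_of_lt_of_le (hpos i) (hMge u' i)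
      refine max_lt ?_ (lt_of_lt_of_le (hlt i) ((le_max_right _ _).trans_eq (hMmax u' i hi).symm))
      rw [hΓm u i hi]
      rw [Finset.sup_lt_iff hMpos]
      intro j _
      rcases hγ i j with hk | hz
      · have h1 : γ i j (u j) < γ i j (u' j) := hk.2.1 (hlt j)
        have h2 : γ i j (u' j) ≤ Γ u' i := by
          rw [hΓm u' i hi]; exact Finset.le_sup (f := fun j => γ i j (u' j)) (Finset.mem_univ j)
        have h3 : Γ u' i ≤ M u' i := by
          rw [hMmax u' i hi]; exact le_max_left _ _
        exact lt_of_lt_of_le h1 (h2.trans h3)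
      · rw [hz]
        exact hMpos
  have hiterlt : ∀ r r' : ℝ≥0, r < r' → ∀ k j,
      M^[k] (fun _ => r) j < M^[k] (fun _ => r') j := by
    intro r r' hrr k
    induction k with
    | zero => intro j; simpa using hrr
    | succ k ih =>
        intro j
        rw [Function.iterate_succ_apply', Function.iterate_succ_apply']
        refine hstep _ _ ih (fun j' => ?_) j
        exact lt_of_le_of_lt (zero_le (a := r)) (lt_of_lt_of_le hrr (hiter_ge (fun _ => r') k j'))
  -- φ facts
  have hφge : ∀ r, r ≤ φ r := by
    intro r
    rw [hφ]
    exact le_trans (hiter_ge (fun _ => r) n ⟨0, hn⟩) (Finset.le_sup (Finset.mem_univ _))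
  have hφmono : StrictMono φ := by
    intro r r' hrr
    rw [hφ r, hφ r']
    have hpos : (⊥ : ℝ≥0) < Finset.univ.sup fun i => M^[n] (fun _ => r') i := by
      refine lt_of_lt_of_le (lt_of_le_of_lt (zero_le (a := r)) hrr) ?_
      exact le_trans (hiter_ge (fun _ => r') n ⟨0, hn⟩) (Finset.le_sup (Finset.mem_univ _))
    rw [Finset.sup_lt_iff hpos]
    intro i _
    exact lt_of_lt_of_le (hiterlt r r' hrr n i) (Finset.le_sup (Finset.mem_univ i))
  have hφ0 : φ 0 = 0 := by
    have hM0 : M (fun _ => 0) = fun _ => 0 := by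
      funext i
      have hΓ0 : Γ (fun _ => 0) i = 0 := by
        by_cases h : i ∈ Isum
        · rw [hΓs _ i h]; simp [hγ0]
        · rw [hΓm _ i h]
          refine le_antisymm (Finset.sup_le fun j _ => le_of_eq (hγ0 i j)) zero_le
      by_cases h : i ∈ Isum
      · rw [hMsum _ i h, hΓ0]; simp [hαinv0]
      · rw [hMmax _ i h, hΓ0]; simp
    rw [hφ, Function.iterate_fixed hM0 n]
    exact le_antisymm (Finset.sup_le fun j _ => le_rfl) zero_le
  have hφunb : ∀ K : ℝ≥0, ∃ r, K < φ r := by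
    intro K
    exact ⟨K + 1, lt_of_lt_of_le (lt_add_one K) (hφge (K + 1))⟩
  -- continuity of φ
  have hΓcont : ∀ i, Continuous fun v : Fin n → ℝ≥0 => Γ v i := by
    intro i
    have heq : (fun v : Fin n → ℝ≥0 => Γ v i)
        = fun v => if i ∈ Isum then ∑ j, γ i j (v j)
            else Finset.univ.sup fun j => γ i j (v j) := funext fun v => hΓ v i
    rw [heq]
    have hcγ : ∀ j, Continuous fun v : Fin n → ℝ≥0 => γ i j (v j) := by
      intro j
      rcases hγ i j with hk | hz
      · exact hk.1.comp (continuous_apply j)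
      · rw [hz]; exact continuous_const
    by_cases hi : i ∈ Isum
    · simp only [if_pos hi]
      exact continuous_finset_sum _ fun j _ => hcγ j
    · simp only [if_neg hi]
      exact cont_finset_sup _ _ hcγ
  have hμΓcont : ∀ i, Continuous fun v : Fin n → ℝ≥0 => μ (Γ v) v i := by
    intro i
    have heq : (fun v : Fin n → ℝ≥0 => μ (Γ v) v i)
        = fun v => if i ∈ Isum then Γ v i + v i else max (Γ v i) (v i) :=
      funext fun v => hμ (Γ v) v i
    rw [heq]
    by_cases hi : i ∈ Isum
    · simp only [if_pos hi]
      exact (hΓcont i).add (continuous_apply i)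
    · simp only [if_neg hi]
      exact (hΓcont i).max (continuous_apply i)
  have hMcont : Continuous M := by
    have heq : M = fun v i => if i ∈ Isum then μ (Γ v) v i + αinv (μ (Γ v) v i)
        else μ (Γ v) v i := funext fun v => funext fun i => hM v i
    rw [heq]
    refine continuous_pi fun i => ?_
    by_cases hi : i ∈ Isum
    · simp only [if_pos hi]
      exact (hμΓcont i).add (hαinv_cont.comp (hμΓcont i))
    · simp only [if_neg hi]
      exact hμΓcont i
  have hMitcont : ∀ k, Continuous (M^[k]) := by
    intro k
    induction k with
    | zero => simpa using continuous_id
    | succ k ih =>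
        rw [Function.iterate_succ]
        exact ih.comp hMcont
  have hφcont : Continuous φ := by
    have heq : φ = fun r => Finset.univ.sup fun i => M^[n] (fun _ => r) i := funext hφ
    rw [heq]
    refine cont_finset_sup _ _ fun i => ?_
    exact (continuous_apply i).comp ((hMitcont n).comp (continuous_pi fun _ => continuous_id))
  refine ⟨⟨hφcont, hφmono, hφ0, hφunb⟩, ?_⟩
  ----------------------------------------------------------------
  -- the main bound
  ----------------------------------------------------------------
  intro w v hwv
  set r := Finset.univ.sup v with hrdef
  have hvr : ∀ i, v i ≤ r := fun i => Finset.le_sup (Finset.mem_univ i)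
  have hwX : ∀ k i, w i ≤ μ (Γ w) (M^[k] fun _ => r) i := by
    intro k i
    have hXr : r ≤ M^[k] (fun _ => r) i := hiter_ge (fun _ => r) k i
    have h1 := hwv i
    by_cases hi : i ∈ Isum
    · rw [hμs _ _ _ hi] at h1 ⊢
      exact h1.trans (add_le_add_right ((hvr i).trans hXr) _)
    · rw [hμm _ _ _ hi] at h1 ⊢
      exact h1.trans (max_le_max le_rfl ((hvr i).trans hXr))
  set Z : ℕ → Finset (Fin n) :=
    fun k => Finset.univ.filter fun i => M^[k] (fun _ => r) i < w i with hZdef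
  have hZsub : ∀ k, Z (k + 1) ⊆ Z k := by
    intro k j hj
    simp only [hZdef, Finset.mem_filter, Finset.mem_univ, true_and] at hj ⊢
    exact lt_of_le_of_lt (hitmono _ k j) hj
  have hZcard : ∀ k, (Z k).card ≤ n - k := by
    intro k
    induction k with
    | zero =>
        simpa using (Finset.card_filter_le _ _).trans (le_of_eq (Finset.card_univ.trans (Fintype.card_fin n)))
    | succ k ih =>
        by_cases hZe : Z k = ∅
        · have h := hZsub k
          rw [hZe, Finset.subset_empty] at h
          simp [h]
        · obtain ⟨i, hi1, hi2⟩ := key w (M^[k] fun _ => r) (hwX k) (by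
            obtain ⟨j, hj⟩ := Finset.nonempty_iff_ne_empty.mpr hZe
            simp only [hZdef, Finset.mem_filter, Finset.mem_univ, true_and] at hj
            exact ⟨j, hj⟩)
          have hiZ : i ∈ Z k := by
            simp only [hZdef, Finset.mem_filter, Finset.mem_univ, true_and]
            exact hi1
          have hiZ' : i ∉ Z (k + 1) := by
            simp only [hZdef, Finset.mem_filter, Finset.mem_univ, true_and]
            rw [Function.iterate_succ_apply']
            exact not_lt.mpr hi2
          have hss : Z (k + 1) ⊂ Z k := ⟨hZsub k, fun h => hiZ' (h hiZ)⟩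
          have := Finset.card_lt_card hss
          omega
  have hZn : Z n = ∅ := by
    have h := hZcard n
    simp only [Nat.sub_self, Nat.le_zero] at h
    exact Finset.card_eq_zero.mp h
  have hwle : ∀ i, w i ≤ M^[n] (fun _ => r) i := by
    intro i
    by_contra h
    have hi : i ∈ Z n := by
      simp only [hZdef, Finset.mem_filter, Finset.mem_univ, true_and]
      exact not_le.mp h
    rw [hZn] at hi
    exact absurd hi (Finset.notMem_empty i)
  rw [hφ]
  exact Finset.sup_mono_fun fun i _ => hwle i
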